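/- The quantity x - (φ←(x) + κ(x+1))/(φ←'(x) + κ) tends to +∞ as x → +∞; in particular, for every real constant C there exists y > 1 with y - (φ←(y) + κ(y+1))/(φ←'(y) + κ) > C. -/

import Mathlib

open Real Set Filter Topology

/-- κ = √γ / α with α = (γ-1)/2. -/
noncomputable def kappa (γ : ℝ) : ℝ := Real.sqrt γ / ((γ - 1) / 2)

/-- The shock branch x ↦ √((1 - x^{-1/α})(x^{γ/α} - 1)), α = (γ-1)/2. -/
noncomputable def shockPart (γ : ℝ) (x : ℝ) : ℝ :=
  Real.sqrt ((1 - x ^ (-(1 : ℝ) / ((γ - 1) / 2))) * (x ^ (γ / ((γ - 1) / 2)) - 1))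

/-- Backward auxiliary function φ← : rarefaction branch κ(x-1) for x ≤ 1,
    shock branch for x ≥ 1 (they agree, with value 0, at x = 1). -/
noncomputable def phiB (γ : ℝ) (x : ℝ) : ℝ :=
  if x ≤ 1 then kappa γ * (x - 1) else shockPart γ x

/-- Forward auxiliary function φ→ : shock branch -√(...) for x ≤ 1,
    rarefaction branch κ(x-1) for x ≥ 1 (they agree, with value 0, at x = 1). -/
noncomputable def phiF (γ : ℝ) (x : ℝ) : ℝ :=
  if x < 1 then -shockPart γ x else kappa γ * (x - 1)

namespace PhiBProofAux

noncomputable def nq (γ : ℝ) : ℝ := -(1 : ℝ) / ((γ - 1) / 2)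
noncomputable def pp (γ : ℝ) : ℝ := γ / ((γ - 1) / 2)
noncomputable def g (γ x : ℝ) : ℝ := (1 - x ^ nq γ) * (x ^ pp γ - 1)
noncomputable def g' (γ x : ℝ) : ℝ :=
  -(nq γ * x ^ (nq γ - 1)) * (x ^ pp γ - 1) + (1 - x ^ nq γ) * (pp γ * x ^ (pp γ - 1))

noncomputable def Nr (γ x : ℝ) : ℝ :=
  Real.sqrt ((1 - x ^ nq γ) * (1 - x ^ (-pp γ))) +
    kappa γ * (x ^ (1 - pp γ / 2) + x ^ (-(pp γ / 2)))

noncomputable def Dr (γ x : ℝ) : ℝ :=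
  (-(nq γ * x ^ nq γ) * (1 - x ^ (-pp γ)) + (1 - x ^ nq γ) * pp γ) /
    (2 * Real.sqrt ((1 - x ^ nq γ) * (1 - x ^ (-pp γ)))) + kappa γ * x ^ (1 - pp γ / 2)

variable {γ : ℝ}

lemma halpha (hγ : 1 < γ) : 0 < (γ - 1) / 2 := by linarith

lemma hnq_neg (hγ : 1 < γ) : nq γ < 0 := by
  have := halpha hγ
  rw [nq]
  exact div_neg_of_neg_of_pos (by norm_num) this

lemma hpp_gt2 (hγ : 1 < γ) : 2 < pp γ := by
  have hα := halpha hγ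
  rw [pp, lt_div_iff₀ hα]
  linarith

lemma hkappa_pos (hγ : 1 < γ) : 0 < kappa γ :=
  div_pos (Real.sqrt_pos.2 (by linarith)) (halpha hγ)

lemma g_hasDeriv (hx : (0:ℝ) < x) : HasDerivAt (g γ) (g' γ x) x := by
  have h1 : HasDerivAt (fun y : ℝ => 1 - y ^ nq γ) (-(nq γ * x ^ (nq γ - 1))) x := by
    exact (Real.hasDerivAt_rpow_const (p := nq γ) (Or.inl hx.ne')).const_sub 1
  have h2 : HasDerivAt (fun y : ℝ => y ^ pp γ - 1) (pp γ * x ^ (pp γ - 1)) x :=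
    (Real.hasDerivAt_rpow_const (Or.inl hx.ne')).sub_const 1
  have := h1.mul h2
  exact this

lemma gA_lt (hγ : 1 < γ) (hx : (1:ℝ) < x) : x ^ nq γ < 1 :=
  Real.rpow_lt_one_of_one_lt_of_neg hx (hnq_neg hγ)

lemma gB_gt (hγ : 1 < γ) (hx : (1:ℝ) < x) : 1 < x ^ pp γ :=
  (Real.one_lt_rpow_iff_of_pos (lt_trans one_pos hx)).2
    (Or.inl ⟨hx, by linarith [hpp_gt2 hγ]⟩)

lemma g_pos (hγ : 1 < γ) (hx : (1:ℝ) < x) : 0 < g γ x := by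
  have h1 := gA_lt hγ hx
  have h2 := gB_gt hγ hx
  exact mul_pos (by linarith) (by linarith)

lemma g'_pos (hγ : 1 < γ) (hx : (1:ℝ) < x) : 0 < g' γ x := by
  have hx0 : (0:ℝ) < x := lt_trans one_pos hx
  have h1 := gA_lt hγ hx
  have h2 := gB_gt hγ hx
  have hq := hnq_neg hγ
  have hp := hpp_gt2 hγ
  have hr1 : (0:ℝ) < x ^ (nq γ - 1) := Real.rpow_pos_of_pos hx0 _
  have hr2 : (0:ℝ) < x ^ (pp γ - 1) := Real.rpow_pos_of_pos hx0 _
  have t1 : 0 < -(nq γ * x ^ (nq γ - 1)) * (x ^ pp γ - 1) := by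
    apply mul_pos _ (by linarith)
    nlinarith
  have t2 : 0 < (1 - x ^ nq γ) * (pp γ * x ^ (pp γ - 1)) := by
    apply mul_pos (by linarith)
    positivity
  rw [g']
  linarith

lemma phiB_eq (hx : (1:ℝ) < x) : phiB γ x = Real.sqrt (g γ x) := by
  rw [phiB, if_neg (not_le.2 hx)]; rfl

lemma phiB_deriv (hγ : 1 < γ) (hx : (1:ℝ) < x) :
    deriv (phiB γ) x = g' γ x / (2 * Real.sqrt (g γ x)) := by
  have hev : phiB γ =ᶠ[𝓝 x] fun y => Real.sqrt (g γ y) := by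
    filter_upwards [Ioi_mem_nhds hx] with y hy
    exact phiB_eq hy
  rw [hev.deriv_eq]
  exact ((g_hasDeriv (lt_trans one_pos hx)).sqrt (g_pos hγ hx).ne').deriv

lemma key_eq (hγ : 1 < γ) {x : ℝ} (hx : (1:ℝ) < x) :
    x * (1 - Nr γ x / Dr γ x)
      = x - (phiB γ x + kappa γ * (x + 1)) / (deriv (phiB γ) x + kappa γ) := by
  have hx0 : (0:ℝ) < x := lt_trans one_pos hx
  have hg := g_pos hγ hx
  have hsg : 0 < Real.sqrt (g γ x) := Real.sqrt_pos.2 hg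
  have hg' := g'_pos hγ hx
  have hκ := hkappa_pos hγ
  set s : ℝ := x ^ (pp γ / 2) with hsdef
  have hs : 0 < s := Real.rpow_pos_of_pos hx0 _
  set A : ℝ := x ^ nq γ with hAdef
  set B : ℝ := x ^ pp γ with hBdef
  have hB : 0 < B := Real.rpow_pos_of_pos hx0 _
  have hsB : s * s = B := by
    rw [hsdef, hBdef, ← Real.rpow_add hx0]
    norm_num
  have hmpp : x ^ (-pp γ) = B⁻¹ := by rw [Real.rpow_neg hx0.le, hBdef]
  have hinner : (1 - A) * (1 - x ^ (-pp γ)) = g γ x / B := by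
    rw [hmpp, g, ← hAdef, ← hBdef]
    field_simp
  have hsqrt : Real.sqrt ((1 - A) * (1 - x ^ (-pp γ))) = Real.sqrt (g γ x) / s := by
    rw [hinner, Real.sqrt_div hg.le, ← hsB, Real.sqrt_mul_self hs.le]
  have hexp2 : x ^ (-(pp γ / 2)) = s⁻¹ := by rw [Real.rpow_neg hx0.le, hsdef]
  have hexp1 : x ^ (1 - pp γ / 2) = x * s⁻¹ := by
    rw [show (1 - pp γ / 2) = 1 + -(pp γ / 2) by ring, Real.rpow_add hx0,
      Real.rpow_one, hexp2]
  have hxn : x ^ (nq γ - 1) * x = A := by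
    rw [Real.rpow_sub_one hx0.ne', hAdef]
    field_simp
  have hxp : x ^ (pp γ - 1) * x = B := by
    rw [Real.rpow_sub_one hx0.ne', hBdef]
    field_simp
  have hg'x : g' γ x * x = -(nq γ * A) * (B - 1) + (1 - A) * (pp γ * B) := by
    rw [g', ← hAdef, ← hBdef]
    linear_combination (-(nq γ) * (B - 1)) * hxn + ((1 - A) * pp γ) * hxp
  have hNr : Nr γ x = (Real.sqrt (g γ x) + kappa γ * (x + 1)) / s := by
    rw [Nr, ← hAdef, hsqrt, hexp1, hexp2]
    field_simp
  have hnum : -(nq γ * A) * (1 - x ^ (-pp γ)) + (1 - A) * pp γ = g' γ x * x / B := by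
    rw [hmpp, eq_div_iff hB.ne', hg'x]
    field_simp
  have hDr : Dr γ x = (g' γ x / (2 * Real.sqrt (g γ x)) + kappa γ) * x / s := by
    rw [Dr, ← hAdef, hsqrt, hexp1, hnum, ← hsB]
    field_simp
  have hD : 0 < g' γ x / (2 * Real.sqrt (g γ x)) + kappa γ := by positivity
  rw [phiB_deriv hγ hx, phiB_eq hx, hNr, hDr]
  set D : ℝ := g' γ x / (2 * Real.sqrt (g γ x)) + kappa γ
  set N : ℝ := Real.sqrt (g γ x) + kappa γ * (x + 1)
  field_simp

lemma t_nq (hγ : 1 < γ) : Tendsto (fun x : ℝ => x ^ nq γ) atTop (𝓝 0) := by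
  have h := tendsto_rpow_neg_atTop (show (0:ℝ) < -nq γ by linarith [hnq_neg hγ])
  simpa using h

lemma t_pp (hγ : 1 < γ) : Tendsto (fun x : ℝ => x ^ (-pp γ)) atTop (𝓝 0) :=
  tendsto_rpow_neg_atTop (by linarith [hpp_gt2 hγ])

lemma t_e1 (hγ : 1 < γ) : Tendsto (fun x : ℝ => x ^ (1 - pp γ / 2)) atTop (𝓝 0) := by
  have h := tendsto_rpow_neg_atTop (show (0:ℝ) < pp γ / 2 - 1 by linarith [hpp_gt2 hγ])
  have : (fun x : ℝ => x ^ (-(pp γ / 2 - 1))) = fun x : ℝ => x ^ (1 - pp γ / 2) := by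
    funext x; ring_nf
  rwa [this] at h

lemma t_e2 (hγ : 1 < γ) : Tendsto (fun x : ℝ => x ^ (-(pp γ / 2))) atTop (𝓝 0) :=
  tendsto_rpow_neg_atTop (by linarith [hpp_gt2 hγ])

lemma t_sqrt (hγ : 1 < γ) :
    Tendsto (fun x : ℝ => Real.sqrt ((1 - x ^ nq γ) * (1 - x ^ (-pp γ)))) atTop (𝓝 1) := by
  have h := (((tendsto_const_nhds (x := (1:ℝ))).sub (t_nq hγ)).mul
    ((tendsto_const_nhds (x := (1:ℝ))).sub (t_pp hγ))).sqrt
  simpa using h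

lemma t_Nr (hγ : 1 < γ) : Tendsto (Nr γ) atTop (𝓝 1) := by
  have h := (t_sqrt hγ).add
    ((tendsto_const_nhds (x := kappa γ)).mul ((t_e1 hγ).add (t_e2 hγ)))
  simp only [add_zero, mul_zero] at h
  exact h

lemma t_Dr (hγ : 1 < γ) : Tendsto (Dr γ) atTop (𝓝 (pp γ / 2)) := by
  have hnum : Tendsto
      (fun x : ℝ => -(nq γ * x ^ nq γ) * (1 - x ^ (-pp γ)) + (1 - x ^ nq γ) * pp γ)
      atTop (𝓝 (pp γ)) := by
    have h := (((tendsto_const_nhds (x := nq γ)).mul (t_nq hγ)).neg.mul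
        ((tendsto_const_nhds (x := (1:ℝ))).sub (t_pp hγ))).add
      (((tendsto_const_nhds (x := (1:ℝ))).sub (t_nq hγ)).mul (tendsto_const_nhds (x := pp γ)))
    simpa using h
  have hden : Tendsto (fun x : ℝ => 2 * Real.sqrt ((1 - x ^ nq γ) * (1 - x ^ (-pp γ))))
      atTop (𝓝 2) := by
    have h := (tendsto_const_nhds (x := (2:ℝ))).mul (t_sqrt hγ)
    simpa using h
  have h := (hnum.div hden (by norm_num)).add
    ((tendsto_const_nhds (x := kappa γ)).mul (t_e1 hγ))
  simp only [mul_zero, add_zero] at h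
  refine h.congr fun x => ?_
  rw [Dr]
  simp only [Pi.div_apply]

lemma t_main (hγ : 1 < γ) :
    Tendsto (fun x : ℝ => x * (1 - Nr γ x / Dr γ x)) atTop atTop := by
  have hpp2 : (0:ℝ) < pp γ / 2 := by linarith [hpp_gt2 hγ]
  have hfrac : Tendsto (fun x : ℝ => 1 - Nr γ x / Dr γ x) atTop (𝓝 (1 - 1 / (pp γ / 2))) :=
    (tendsto_const_nhds (x := (1:ℝ))).sub ((t_Nr hγ).div (t_Dr hγ) hpp2.ne')
  have hc : 1 - 1 / (pp γ / 2) = 1 / γ := by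
    rw [pp]
    have h1 : γ - 1 ≠ 0 := by linarith
    have h2 : γ ≠ 0 := by linarith
    field_simp
    ring
  rw [hc] at hfrac
  exact tendsto_id.atTop_mul_pos (by positivity) hfrac

end PhiBProofAux

/-- x - (φ←(x)+κ(x+1))/(φ←'(x)+κ) → +∞ as x → +∞; in particular,
    for every real C there is y > 1 where this quantity exceeds C. -/
theorem phiB_limit_quantity (γ : ℝ) (hγ : 1 < γ) :
    Filter.Tendsto
      (fun x : ℝ => x - (phiB γ x + kappa γ * (x + 1)) / (deriv (phiB γ) x + kappa γ))
      Filter.atTop Filter.atTop ∧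
    ∀ C : ℝ, ∃ y : ℝ, 1 < y ∧
      C < y - (phiB γ y + kappa γ * (y + 1)) / (deriv (phiB γ) y + kappa γ) := by
  have hT : Filter.Tendsto
      (fun x : ℝ => x - (phiB γ x + kappa γ * (x + 1)) / (deriv (phiB γ) x + kappa γ))
      Filter.atTop Filter.atTop := by
    refine Filter.Tendsto.congr' ?_ (PhiBProofAux.t_main hγ)
    filter_upwards [eventually_gt_atTop (1:ℝ)] with x hx
    exact PhiBProofAux.key_eq hγ hx
  refine ⟨hT, fun C => ?_⟩
  obtain ⟨y, hy1, hy2⟩ := ((hT.eventually_gt_atTop C).and (eventually_gt_atTop (1:ℝ))).exists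
  exact ⟨y, hy2, hy1⟩
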